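/- Let M, K ≥ 0, β ∈ (0,1), θ ∈ (0,1], x ∈ D_θ. Let f : (0,∞) → H be continuous with ‖f(s)‖ ≤ M for all s > 0 and ‖f(t) − f(s)‖ ≤ K (t−s)^β (1 + s^{-β}) for all 0 < s < t, and define X(t) = S(t)x + ∫₀^t S(t−s) f(s) ds for t > 0 (Bochner integral in H). Then there exists a constant C (depending only on θ, β and λ₀) such that for every t > 0, X(t) ∈ D_1 and |X(t)|_1 ≤ C (1 + t^{θ−1}) (|x|_θ + M + K). -/

import Mathlib

open Real MeasureTheory Set Filter intervalIntegral
open scoped ENNReal Topology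

noncomputable section

/-- `Hsp` is the real Hilbert space `ℓ²` of square-summable real sequences. -/
abbrev Hsp : Type := lp (fun _ : ℕ => ℝ) 2

/-- The norm `|x|_σ = (∑ₖ λₖ^{2σ} xₖ²)^{1/2}` of the domain `D((-A)^σ)`;
in particular `|x|_1 = ‖Ax‖`. -/
noncomputable def nrmD (lam : ℕ → ℝ) (σ : ℝ) (x : Hsp) : ℝ :=
  Real.sqrt (∑' k, lam k ^ (2 * σ) * (x k) ^ 2)

/-- Membership in the domain `D((-A)^σ)`: `∑ₖ λₖ^{2σ} xₖ² < ∞`. -/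
def memD (lam : ℕ → ℝ) (σ : ℝ) (x : Hsp) : Prop :=
  Summable (fun k => lam k ^ (2 * σ) * (x k) ^ 2)


lemma rpow_mul_exp_le_one {p a : ℝ} (hp0 : 0 ≤ p) (hp1 : p ≤ 1) (ha : 0 ≤ a) :
    a ^ p * Real.exp (-a) ≤ 1 := by
  rcases le_or_gt a 1 with h | h
  · have h1 : a ^ p ≤ 1 := Real.rpow_le_one ha h hp0
    have h2 : Real.exp (-a) ≤ 1 := Real.exp_le_one_iff.mpr (by linarith)
    nlinarith [Real.exp_pos (-a), Real.rpow_nonneg ha p]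
  · have h1 : a ^ p ≤ a ^ (1:ℝ) := Real.rpow_le_rpow_of_exponent_le h.le hp1
    rw [Real.rpow_one] at h1
    have h2 : a ≤ Real.exp a := (Real.add_one_le_exp a).trans' (by linarith)
    have h3 : Real.exp (-a) = (Real.exp a)⁻¹ := by rw [Real.exp_neg]
    have h4 : Real.exp a > 0 := Real.exp_pos a
    calc a ^ p * Real.exp (-a) ≤ a * Real.exp (-a) := by
          nlinarith [Real.exp_pos (-a)]
      _ ≤ 1 := by rw [h3]; rw [mul_inv_le_iff₀ h4, one_mul]; exact h2

lemma mul_exp_le_one {a : ℝ} (ha : 0 ≤ a) : a * Real.exp (-a) ≤ 1 := by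
  have := rpow_mul_exp_le_one (p := 1) zero_le_one le_rfl ha
  rwa [Real.rpow_one] at this

lemma sq_summable (y : Hsp) : Summable fun k => (y k) ^ 2 := by
  have := (lp.memℓp y).summable (p := 2) (by norm_num)
  refine this.congr fun k => ?_
  rw [show ((2:ℝ≥0∞).toReal) = ((2:ℕ):ℝ) by norm_num, Real.rpow_natCast,
    Real.norm_eq_abs, sq_abs]

lemma norm_sq_eq_tsum (y : Hsp) : ‖y‖ ^ 2 = ∑' k, (y k) ^ 2 := by
  have h := lp.norm_rpow_eq_tsum (p := 2) (by norm_num) y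
  have h2 : ‖y‖ ^ ((2:ℝ≥0∞).toReal) = ‖y‖ ^ (2:ℕ) := by
    rw [show ((2:ℝ≥0∞).toReal) = ((2:ℕ):ℝ) by norm_num, Real.rpow_natCast]
  rw [h2] at h
  rw [h]
  congr 1; funext k
  rw [show ((2:ℝ≥0∞).toReal) = ((2:ℕ):ℝ) by norm_num, Real.rpow_natCast,
    Real.norm_eq_abs, sq_abs]

lemma finsum_sq_le (y : Hsp) (F : Finset ℕ) : ∑ k ∈ F, (y k) ^ 2 ≤ ‖y‖ ^ 2 := by
  rw [norm_sq_eq_tsum]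
  exact Summable.sum_le_tsum F (fun k _ => sq_nonneg _) (sq_summable y)


/-- evaluation at coordinate `k` as a CLM -/
def evalCLM (k : ℕ) : Hsp →L[ℝ] ℝ :=
  LinearMap.mkContinuous
    { toFun := fun x => x k
      map_add' := fun x y => by simp [lp.coeFn_add x y, Pi.add_apply]
      map_smul' := fun c x => by simp [lp.coeFn_smul c x, Pi.smul_apply] } 1
    (fun x => by
      show ‖(x : ℕ → ℝ) k‖ ≤ 1 * ‖x‖
      simpa using lp.norm_apply_le_norm (p := 2) (by norm_num) x k)

@[simp] lemma evalCLM_apply (k : ℕ) (x : Hsp) : evalCLM k x = x k := rfl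

lemma le_of_sq_le_sq' {x y : ℝ} (hx : 0 ≤ x) (hy : 0 ≤ y) (h : x ^ 2 ≤ y ^ 2) : x ≤ y := by
  nlinarith

lemma norm_le_of_coord (y z : Hsp) (c : ℝ) (hc : 0 ≤ c)
    (h : ∀ k, |y k| ≤ c * |z k|) : ‖y‖ ≤ c * ‖z‖ := by
  refine le_of_sq_le_sq' (norm_nonneg _) (mul_nonneg hc (norm_nonneg _)) ?_
  rw [mul_pow, norm_sq_eq_tsum, norm_sq_eq_tsum, ← tsum_mul_left]
  refine Summable.tsum_le_tsum (fun k => ?_) (sq_summable y) ((sq_summable z).mul_left _)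
  have hk := h k
  nlinarith [sq_abs (y k), sq_abs (z k), abs_nonneg (y k), abs_nonneg (z k)]

lemma exp_diff_le {l a b : ℝ} (hl : 0 < l) (ha : 0 < a) (hab : a ≤ b) :
    Real.exp (-(l * a)) - Real.exp (-(l * b)) ≤ (b - a) / a := by
  have hE : (0:ℝ) < Real.exp (-(l * a)) := Real.exp_pos _
  have hEy : Real.exp (-(l * b)) = Real.exp (-(l * a)) * Real.exp (-(l * (b - a))) := by
    rw [← Real.exp_add]; ring_nf
  have hF : 1 - Real.exp (-(l * (b - a))) ≤ l * (b - a) := by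
    have := Real.add_one_le_exp (-(l * (b - a))); linarith
  have hxE : (l * a) * Real.exp (-(l * a)) ≤ 1 := mul_exp_le_one (by positivity)
  rw [hEy, le_div_iff₀ ha]
  have h2 : Real.exp (-(l * a)) * (1 - Real.exp (-(l * (b - a)))) ≤
      Real.exp (-(l * a)) * (l * (b - a)) := mul_le_mul_of_nonneg_left hF hE.le
  nlinarith [mul_le_mul_of_nonneg_right hxE (sub_nonneg.mpr hab)]

section Sop
variable {lam : ℕ → ℝ} {lam0 : ℝ} (hlam0 : 0 < lam0) (hlam : ∀ k, lam0 ≤ lam k)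
  {S : ℝ → Hsp → Hsp}
  (hS : ∀ t : ℝ, 0 ≤ t → ∀ (x : Hsp) (k : ℕ), S t x k = Real.exp (-(lam k * t)) * x k)

include hlam0 hlam hS

lemma S_norm_le {τ : ℝ} (hτ : 0 ≤ τ) (z : Hsp) : ‖S τ z‖ ≤ ‖z‖ := by
  have := norm_le_of_coord (S τ z) z 1 zero_le_one (fun k => ?_)
  · simpa using this
  · rw [hS τ hτ z k, one_mul, abs_mul]
    have h1 : |Real.exp (-(lam k * τ))| ≤ 1 := by
      rw [abs_of_pos (Real.exp_pos _)]
      refine Real.exp_le_one_iff.mpr ?_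
      have := (hlam0.trans_le (hlam k)).le
      nlinarith
    nlinarith [abs_nonneg (z k), abs_nonneg (Real.exp (-(lam k * τ)))]

lemma S_sub_same (τ : ℝ) (hτ : 0 ≤ τ) (y z : Hsp) :
    S τ y - S τ z = S τ (y - z) := by
  apply lp.ext; funext k
  rw [lp.coeFn_sub, Pi.sub_apply, hS τ hτ, hS τ hτ, hS τ hτ, lp.coeFn_sub, Pi.sub_apply]
  ring

lemma S_time_diff {a b ε : ℝ} (hε : 0 < ε) (hεa : ε ≤ a) (hεb : ε ≤ b) (z : Hsp) :
    ‖S a z - S b z‖ ≤ (|a - b| / ε) * ‖z‖ := by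
  have key : ∀ a b : ℝ, ε ≤ a → ε ≤ b → a ≤ b → ‖S a z - S b z‖ ≤ (|a - b| / ε) * ‖z‖ := by
    intro a b hεa hεb hab
    refine norm_le_of_coord _ z _ (by positivity) fun k => ?_
    rw [lp.coeFn_sub, Pi.sub_apply, hS a (hε.trans_le hεa).le z k, hS b (hε.trans_le hεb).le z k]
    rw [← sub_mul, abs_mul]
    refine mul_le_mul_of_nonneg_right ?_ (abs_nonneg _)
    have hl : 0 < lam k := hlam0.trans_le (hlam k)
    have h1 : Real.exp (-(lam k * b)) ≤ Real.exp (-(lam k * a)) := by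
      apply Real.exp_le_exp.mpr; nlinarith
    rw [abs_of_nonneg (by linarith)]
    have := exp_diff_le hl (hε.trans_le hεa) hab
    have h2 : (b - a) / a ≤ (b - a) / ε := by
      apply div_le_div_of_nonneg_left (by linarith) hε hεa
    rw [abs_of_nonpos (by linarith), neg_sub]
    linarith
  rcases le_total a b with hab | hab
  · exact key a b hεa hεb hab
  · have := key b a hεb hεa hab
    rwa [← norm_neg, neg_sub, abs_sub_comm] at this

lemma G_contOn {t : ℝ} (ht : 0 < t) {f : ℝ → Hsp} (hf : ContinuousOn f (Set.Ioi 0)) :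
    ContinuousOn (fun s => S (t - s) (f s)) (Set.Ioo 0 t) := by
  intro s₀ hs₀
  obtain ⟨hs₀0, hs₀t⟩ := hs₀
  set ε := (t - s₀) / 2 with hεdef
  have hε : 0 < ε := by simp only [hεdef]; linarith
  set c := (s₀ + t) / 2 with hcdef
  have hs₀c : s₀ < c := by simp only [hcdef]; linarith
  have hev : ∀ᶠ s in 𝓝[Set.Ioo 0 t] s₀, s ∈ Set.Ioo 0 t ∧ s < c := by
    filter_upwards [eventually_mem_nhdsWithin,
      eventually_nhdsWithin_of_eventually_nhds (Filter.Tendsto.eventually_lt_const hs₀c tendsto_id)]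
      with s h1 h2
    exact ⟨h1, h2⟩
  have hbound : ∀ s, s ∈ Set.Ioo 0 t ∧ s < c →
      ‖(fun s => S (t - s) (f s)) s - S (t - s₀) (f s₀)‖ ≤
        ‖f s - f s₀‖ + (|s - s₀| / ε) * ‖f s₀‖ := by
    intro s ⟨⟨hs0, hst⟩, hsc⟩
    have h1 : S (t - s) (f s) - S (t - s₀) (f s₀) =
        S (t - s) (f s - f s₀) + (S (t - s) (f s₀) - S (t - s₀) (f s₀)) := by
      rw [← S_sub_same hlam0 hlam hS (t - s) (by linarith) (f s) (f s₀)]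
      abel
    rw [h1]
    refine (norm_add_le _ _).trans (add_le_add ?_ ?_)
    · exact S_norm_le hlam0 hlam hS (by linarith) _
    · have hεts : ε ≤ t - s := by simp only [hεdef, hcdef] at *; linarith
      have hεts₀ : ε ≤ t - s₀ := by simp only [hεdef]; linarith
      have := S_time_diff hlam0 hlam hS hε hεts hεts₀ (f s₀)
      have habs : |t - s - (t - s₀)| = |s - s₀| := by
        rw [show t - s - (t - s₀) = -(s - s₀) by ring, abs_neg]
      rwa [habs] at this
  have hf₀ : Tendsto f (𝓝[Set.Ioo 0 t] s₀) (𝓝 (f s₀)) :=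
    (hf s₀ hs₀0).mono_left (nhdsWithin_mono s₀ (fun y hy => hy.1))
  have h2 : Tendsto (fun s => ‖f s - f s₀‖ + (|s - s₀| / ε) * ‖f s₀‖)
      (𝓝[Set.Ioo 0 t] s₀) (𝓝 0) := by
    have ha : Tendsto (fun s => ‖f s - f s₀‖) (𝓝[Set.Ioo 0 t] s₀) (𝓝 0) := by
      have := (hf₀.sub (tendsto_const_nhds : Tendsto (fun _ => f s₀) _ _)).norm
      simpa using this
    have hb : Tendsto (fun s : ℝ => (|s - s₀| / ε) * ‖f s₀‖) (𝓝[Set.Ioo 0 t] s₀)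
        (𝓝 ((|s₀ - s₀| / ε) * ‖f s₀‖)) := by
      refine Filter.Tendsto.mono_left ?_ nhdsWithin_le_nhds
      exact ((((continuous_id.sub continuous_const).abs).div_const ε).mul continuous_const).tendsto s₀
    simp only [sub_self, abs_zero, zero_div, zero_mul] at hb
    simpa using ha.add hb
  have h3 : Tendsto (fun s => S (t - s) (f s) - S (t - s₀) (f s₀))
      (𝓝[Set.Ioo 0 t] s₀) (𝓝 0) := by
    apply squeeze_zero_norm' _ h2
    filter_upwards [hev] with s hs using hbound s hs
  exact tendsto_sub_nhds_zero_iff.mp h3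

lemma G_intervalIntegrable {t M : ℝ} (ht : 0 < t) {f : ℝ → Hsp}
    (hf : ContinuousOn f (Set.Ioi 0)) (hfM : ∀ s : ℝ, 0 < s → ‖f s‖ ≤ M) :
    IntervalIntegrable (fun s => S (t - s) (f s)) volume 0 t := by
  rw [intervalIntegrable_iff_integrableOn_Ioo_of_le ht.le]
  refine ⟨(G_contOn hlam0 hlam hS ht hf).aestronglyMeasurable measurableSet_Ioo, ?_⟩
  refine HasFiniteIntegral.restrict_of_bounded (C := M) (by simp) ?_
  filter_upwards [ae_restrict_mem measurableSet_Ioo] with s hs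
  exact (S_norm_le hlam0 hlam hS (by linarith [hs.2]) (f s)).trans (hfM s hs.1)

end Sop


lemma II_of_bound {g h : ℝ → ℝ} {a b : ℝ} (hab : a ≤ b)
    (hh : IntervalIntegrable h volume a b)
    (hg : ContinuousOn g (Set.Ioo a b))
    (hbd : ∀ s ∈ Set.Ioo a b, |g s| ≤ h s) : IntervalIntegrable g volume a b := by
  have hres : volume.restrict (Set.uIoc a b) = volume.restrict (Set.Ioo a b) := by
    rw [uIoc_of_le hab, Measure.restrict_congr_set Ioo_ae_eq_Ioc]
  refine hh.mono_fun ?_ ?_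
  · rw [hres]; exact hg.aestronglyMeasurable measurableSet_Ioo
  · rw [hres]
    filter_upwards [ae_restrict_mem measurableSet_Ioo] with s hs
    have h1 := hbd s hs
    have h2 : 0 ≤ h s := (abs_nonneg _).trans h1
    rw [Real.norm_eq_abs, Real.norm_eq_abs, abs_of_nonneg h2]
    exact h1

lemma integral_le_of_bound {g h : ℝ → ℝ} {a b : ℝ} (hab : a ≤ b)
    (hgI : IntervalIntegrable g volume a b) (hhI : IntervalIntegrable h volume a b)
    (hbd : ∀ s ∈ Set.Ioo a b, g s ≤ h s) :
    ∫ s in a..b, g s ≤ ∫ s in a..b, h s := by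
  refine intervalIntegral.integral_mono_ae_restrict hab hgI hhI ?_
  have hres : volume.restrict (Set.Icc a b) = volume.restrict (Set.Ioo a b) :=
    (Measure.restrict_congr_set Ioo_ae_eq_Icc).symm
  rw [EventuallyLE, hres]
  filter_upwards [ae_restrict_mem measurableSet_Ioo] with s hs
  exact hbd s hs

lemma integral_exp_kernel {l : ℝ} (hl : 0 < l) (t a b : ℝ) :
    ∫ s in a..b, Real.exp (-(l * (t - s))) =
      (Real.exp (-(l * (t - b))) - Real.exp (-(l * (t - a)))) / l := by
  have hfun : (fun s : ℝ => -(l * (t - s))) = fun s => l * s - l * t := by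
    funext s; ring
  have hder : ∀ x ∈ uIcc a b,
      HasDerivAt (fun s => Real.exp (-(l * (t - s))) / l) (Real.exp (-(l * (t - x)))) x := by
    intro x _
    have h1 : HasDerivAt (fun s : ℝ => -(l * (t - s))) l x := by
      rw [hfun]
      simpa using ((hasDerivAt_id x).const_mul l).sub_const (l * t)
    have h2 := (h1.exp).div_const l
    have : Real.exp (-(l * (t - x))) * l / l = Real.exp (-(l * (t - x))) := by
      field_simp
    rwa [this] at h2
  have hcont : Continuous fun s : ℝ => Real.exp (-(l * (t - s))) := by
    apply Real.continuous_exp.comp; continuity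
  rw [intervalIntegral.integral_eq_sub_of_hasDerivAt hder (hcont.intervalIntegrable a b)]
  ring

lemma II_rpow_kernel {r : ℝ} (hr : -1 < r) (a t : ℝ) :
    IntervalIntegrable (fun s => (t - s) ^ r) volume a t := by
  simpa using ((intervalIntegrable_rpow' (a := 0) (b := t - a) hr).comp_sub_left t).symm

lemma integral_rpow_kernel {r : ℝ} (hr : -1 < r) (a t : ℝ) :
    ∫ s in a..t, (t - s) ^ r = (t - a) ^ (r + 1) / (r + 1) := by
  have h := intervalIntegral.integral_comp_sub_left (a := a) (b := t) (fun x => x ^ r) t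
  rw [h, sub_self, integral_rpow (Or.inl hr), Real.zero_rpow (by linarith), sub_zero]

lemma contOn_rpow_kernel {r t b : ℝ} (hbt : b ≤ t) :
    ContinuousOn (fun s => (t - s) ^ r) (Set.Ioo 0 b) := by
  intro s hs
  have hne : t - s ≠ 0 := (sub_pos.mpr (lt_of_lt_of_le hs.2 hbt)).ne'
  exact ((Real.continuousAt_rpow_const _ r (Or.inl hne)).comp
    ((continuous_const.sub continuous_id).continuousAt)).continuousWithinAt

lemma Ia_bound {β l t : ℝ} (hβ : β ∈ Set.Ioo (0:ℝ) 1) (hl : 0 < l) (ht : 0 < t) :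
    IntervalIntegrable (fun s => (t - s) ^ (β - 1) * Real.exp (-(l * (t - s)))) volume 0 t ∧
    ∫ s in (0:ℝ)..t, (t - s) ^ (β - 1) * Real.exp (-(l * (t - s))) ≤ 1 / β + 1 / l := by
  obtain ⟨hβ0, hβ1⟩ := hβ
  have hrm : (-1:ℝ) < β - 1 := by linarith
  have hker := II_rpow_kernel hrm 0 t
  have hcont : ∀ b ≤ t, ContinuousOn
      (fun s => (t - s) ^ (β - 1) * Real.exp (-(l * (t - s)))) (Set.Ioo 0 b) := by
    intro b hb
    exact (contOn_rpow_kernel hb).mul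
      ((Real.continuous_exp.comp (by continuity)).continuousOn)
  have hbd1 : ∀ s ∈ Set.Ioo (0:ℝ) t,
      |(t - s) ^ (β - 1) * Real.exp (-(l * (t - s)))| ≤ (t - s) ^ (β - 1) := by
    intro s hs
    have h1 : (0:ℝ) ≤ (t - s) ^ (β - 1) := Real.rpow_nonneg (by linarith [hs.2]) _
    have h2 : Real.exp (-(l * (t - s))) ≤ 1 := by
      apply Real.exp_le_one_iff.mpr; nlinarith [hs.2]
    rw [abs_of_nonneg (mul_nonneg h1 (Real.exp_pos _).le)]
    nlinarith [Real.exp_pos (-(l * (t - s)))]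
  have hII : IntervalIntegrable
      (fun s => (t - s) ^ (β - 1) * Real.exp (-(l * (t - s)))) volume 0 t :=
    II_of_bound ht.le hker (hcont t le_rfl) hbd1
  refine ⟨hII, ?_⟩
  have hβeq : β - 1 + 1 = β := by ring
  rcases le_or_gt t 1 with hle | hgt
  · have h3 := integral_le_of_bound ht.le hII hker (fun s hs =>
      (le_abs_self _).trans (hbd1 s hs))
    rw [integral_rpow_kernel hrm 0 t, hβeq, sub_zero] at h3
    have h4 : t ^ β ≤ 1 := Real.rpow_le_one ht.le hle hβ0.le
    have h6 : t ^ β / β ≤ 1 / β := (div_le_div_iff_of_pos_right hβ0).mpr h4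
    have h5 : (0:ℝ) < 1 / l := by positivity
    linarith
  · set m := t - 1 with hm
    have hm0 : 0 < m := by simp only [hm]; linarith
    have hmt : m < t := by simp only [hm]; linarith
    have hexpII : IntervalIntegrable (fun s => Real.exp (-(l * (t - s)))) volume 0 m :=
      (Real.continuous_exp.comp (by continuity)).intervalIntegrable 0 m
    have hbd2 : ∀ s ∈ Set.Ioo (0:ℝ) m,
        |(t - s) ^ (β - 1) * Real.exp (-(l * (t - s)))| ≤ Real.exp (-(l * (t - s))) := by
      intro s hs
      have h1 : (1:ℝ) ≤ t - s := by
        have := hs.2; simp only [hm] at this ⊢; linarith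
      have h2 : (t - s) ^ (β - 1) ≤ 1 :=
        Real.rpow_le_one_of_one_le_of_nonpos h1 (by linarith)
      have h3 : (0:ℝ) ≤ (t - s) ^ (β - 1) := Real.rpow_nonneg (by linarith) _
      rw [abs_of_nonneg (mul_nonneg h3 (Real.exp_pos _).le)]
      nlinarith [Real.exp_pos (-(l * (t - s)))]
    have hII1 : IntervalIntegrable
        (fun s => (t - s) ^ (β - 1) * Real.exp (-(l * (t - s)))) volume 0 m :=
      II_of_bound hm0.le hexpII (hcont m hmt.le) hbd2
    have hII2 : IntervalIntegrable
        (fun s => (t - s) ^ (β - 1) * Real.exp (-(l * (t - s)))) volume m t :=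
      hII.mono_set' (by
        rw [uIoc_of_le hmt.le, uIoc_of_le ht.le]
        exact Set.Ioc_subset_Ioc hm0.le le_rfl)
    have hsplit := intervalIntegral.integral_add_adjacent_intervals hII1 hII2
    -- first piece
    have h7 := integral_le_of_bound hm0.le hII1 hexpII (fun s hs =>
      (le_abs_self _).trans (hbd2 s hs))
    rw [integral_exp_kernel hl t 0 m] at h7
    have h8 : (Real.exp (-(l * (t - m))) - Real.exp (-(l * (t - 0)))) / l ≤ 1 / l := by
      apply (div_le_div_iff_of_pos_right hl).mpr
      have := Real.exp_pos (-(l * (t - 0)))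
      have : Real.exp (-(l * (t - m))) ≤ 1 := by
        apply Real.exp_le_one_iff.mpr
        simp only [hm]; nlinarith
      linarith [Real.exp_pos (-(l * (t - 0)))]
    -- second piece
    have hker2 := II_rpow_kernel hrm m t
    have h9 := integral_le_of_bound hmt.le hII2 hker2 (fun s hs => by
      have h1 : (0:ℝ) ≤ (t - s) ^ (β - 1) := Real.rpow_nonneg (by linarith [hs.2]) _
      have h2 : Real.exp (-(l * (t - s))) ≤ 1 := by
        apply Real.exp_le_one_iff.mpr; nlinarith [hs.2]
      nlinarith [Real.exp_pos (-(l * (t - s)))])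
    rw [integral_rpow_kernel hrm m t, hβeq] at h9
    have h10 : (t - m) ^ β / β = 1 / β := by
      simp only [hm, show t - (t - 1) = (1:ℝ) by ring, Real.one_rpow]
    rw [h10] at h9
    linarith

lemma Ib_bound {β t : ℝ} (hβ : β ∈ Set.Ioo (0:ℝ) 1) (ht : 0 < t) :
    IntervalIntegrable (fun s => (t - s) ^ (β - 1) * s ^ (-β)) volume 0 t ∧
    ∫ s in (0:ℝ)..t, (t - s) ^ (β - 1) * s ^ (-β) ≤ 1 / (1 - β) + 1 / β := by
  obtain ⟨hβ0, hβ1⟩ := hβ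
  have hrm : (-1:ℝ) < β - 1 := by linarith
  have hrb : (-1:ℝ) < -β := by linarith
  set m := t / 2 with hm
  have hm0 : 0 < m := by positivity
  have hmt : m < t := by simp only [hm]; linarith
  have htm : t - m = m := by simp only [hm]; ring
  have hcont : ∀ a b : ℝ, 0 ≤ a → b ≤ t →
      ContinuousOn (fun s => (t - s) ^ (β - 1) * s ^ (-β)) (Set.Ioo a b) := by
    intro a b ha hb
    refine ContinuousOn.mul (ContinuousOn.mono (contOn_rpow_kernel hb) ?_) ?_
    · intro s hs; exact ⟨lt_of_le_of_lt ha hs.1, hs.2⟩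
    · intro s hs
      have hne : s ≠ 0 := (lt_of_le_of_lt ha hs.1).ne'
      exact ((Real.continuousAt_rpow_const _ (-β) (Or.inl hne)).comp
        continuous_id.continuousAt).continuousWithinAt
  -- piece 1 : on [0, m], bound by m^(β-1) * s^(-β)
  have hh1 : IntervalIntegrable (fun s => m ^ (β - 1) * s ^ (-β)) volume 0 m :=
    (intervalIntegrable_rpow' hrb).const_mul _
  have hbd1 : ∀ s ∈ Set.Ioo (0:ℝ) m,
      |(t - s) ^ (β - 1) * s ^ (-β)| ≤ m ^ (β - 1) * s ^ (-β) := by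
    intro s hs
    have hs0 := hs.1
    have hst : s < t := lt_trans hs.2 hmt
    have h1 : (t - s) ^ (β - 1) ≤ m ^ (β - 1) := by
      apply Real.rpow_le_rpow_of_nonpos hm0 ?_ (by linarith)
      linarith [hs.2]
    have h2 : (0:ℝ) ≤ s ^ (-β) := Real.rpow_nonneg hs0.le _
    have h3 : (0:ℝ) ≤ (t - s) ^ (β - 1) := Real.rpow_nonneg (by linarith) _
    rw [abs_of_nonneg (mul_nonneg h3 h2)]
    exact mul_le_mul_of_nonneg_right h1 h2
  have hII1 : IntervalIntegrable (fun s => (t - s) ^ (β - 1) * s ^ (-β)) volume 0 m :=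
    II_of_bound hm0.le hh1 (hcont 0 m le_rfl hmt.le) hbd1
  -- piece 2 : on [m, t], bound by m^(-β) * (t-s)^(β-1)
  have hh2 : IntervalIntegrable (fun s => m ^ (-β) * (t - s) ^ (β - 1)) volume m t :=
    (II_rpow_kernel hrm m t).const_mul _
  have hbd2 : ∀ s ∈ Set.Ioo m t,
      |(t - s) ^ (β - 1) * s ^ (-β)| ≤ m ^ (-β) * (t - s) ^ (β - 1) := by
    intro s hs
    have h1 : s ^ (-β) ≤ m ^ (-β) :=
      Real.rpow_le_rpow_of_nonpos hm0 hs.1.le (by linarith)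
    have h2 : (0:ℝ) ≤ (t - s) ^ (β - 1) := Real.rpow_nonneg (by linarith [hs.2]) _
    have h3 : (0:ℝ) ≤ s ^ (-β) := Real.rpow_nonneg (by linarith [hm0, hs.1]) _
    rw [abs_of_nonneg (mul_nonneg h2 h3), mul_comm ((t - s) ^ (β - 1))]
    exact mul_le_mul_of_nonneg_right h1 h2
  have hcont2 : ContinuousOn (fun s => (t - s) ^ (β - 1) * s ^ (-β)) (Set.Ioo m t) := by
    refine (hcont 0 t le_rfl le_rfl).mono ?_
    intro s hs; exact ⟨lt_trans hm0 hs.1, hs.2⟩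
  have hII2 : IntervalIntegrable (fun s => (t - s) ^ (β - 1) * s ^ (-β)) volume m t :=
    II_of_bound hmt.le hh2 hcont2 hbd2
  refine ⟨hII1.trans hII2, ?_⟩
  have hsplit := intervalIntegral.integral_add_adjacent_intervals hII1 hII2
  -- evaluate bound integrals
  have e1 : ∫ s in (0:ℝ)..m, m ^ (β - 1) * s ^ (-β) = 1 / (1 - β) := by
    rw [intervalIntegral.integral_const_mul, integral_rpow (Or.inl hrb),
      Real.zero_rpow (by linarith : -β + 1 ≠ 0)]
    rw [show -β + 1 = 1 - β by ring, sub_zero]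
    rw [div_eq_mul_one_div (m ^ (1 - β)) (1 - β), ← mul_assoc,
      ← Real.rpow_add hm0, show β - 1 + (1 - β) = 0 by ring, Real.rpow_zero, one_mul]
  have e2 : ∫ s in m..t, m ^ (-β) * (t - s) ^ (β - 1) = 1 / β := by
    rw [intervalIntegral.integral_const_mul, integral_rpow_kernel hrm m t,
      show β - 1 + 1 = β by ring, htm]
    rw [div_eq_mul_one_div (m ^ β) β, ← mul_assoc, ← Real.rpow_add hm0,
      show -β + β = 0 by ring, Real.rpow_zero, one_mul]
  have h7 := integral_le_of_bound hm0.le hII1 hh1 (fun s hs =>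
    (le_abs_self _).trans (hbd1 s hs))
  have h8 := integral_le_of_bound hmt.le hII2 hh2 (fun s hs =>
    (le_abs_self _).trans (hbd2 s hs))
  rw [e1] at h7
  rw [e2] at h8
  linarith

lemma lam_exp_bound1 {l t θ : ℝ} (hl : 0 < l) (ht : 0 < t) (hθ : θ ∈ Set.Ioc (0:ℝ) 1) :
    l * Real.exp (-(l * t)) ≤ t ^ (θ - 1) * l ^ θ := by
  obtain ⟨hθ0, hθ1⟩ := hθ
  have ha : 0 < l * t := by positivity
  have h := rpow_mul_exp_le_one (p := 1 - θ) (by linarith) (by linarith) ha.le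
  rw [Real.mul_rpow hl.le ht.le] at h
  have htp : (0:ℝ) < t ^ (θ - 1) := Real.rpow_pos_of_pos ht _
  have hlp : (0:ℝ) < l ^ θ := Real.rpow_pos_of_pos hl _
  have h2 : t ^ (θ - 1) * t ^ (1 - θ) = 1 := by
    rw [← Real.rpow_add ht]; norm_num
  have key : l ^ (1 - θ) * Real.exp (-(l * t)) ≤ t ^ (θ - 1) := by
    calc l ^ (1 - θ) * Real.exp (-(l * t))
        = (t ^ (θ - 1) * t ^ (1 - θ)) * (l ^ (1 - θ) * Real.exp (-(l * t))) := by
          rw [h2, one_mul]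
      _ = t ^ (θ - 1) * (l ^ (1 - θ) * t ^ (1 - θ) * Real.exp (-(l * t))) := by ring
      _ ≤ t ^ (θ - 1) * 1 := mul_le_mul_of_nonneg_left h htp.le
      _ = t ^ (θ - 1) := mul_one _
  have heq : l ^ θ * (l ^ (1 - θ) * Real.exp (-(l * t))) = l * Real.exp (-(l * t)) := by
    rw [← mul_assoc, ← Real.rpow_add hl, show θ + (1 - θ) = 1 by ring, Real.rpow_one]
  linarith [mul_le_mul_of_nonneg_left key hlp.le, heq]

lemma lam_exp_bound2 {lam0 l τ : ℝ} (hlam0 : 0 < lam0) (hl : lam0 ≤ l) (hτ : 0 < τ) :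
    l * Real.exp (-(l * τ)) ≤ (2 / τ) * Real.exp (-(lam0 / 2 * τ)) := by
  have hl0 : 0 < l := lt_of_lt_of_le hlam0 hl
  set E := Real.exp (-(l * τ / 2)) with hE
  have hEpos : 0 < E := Real.exp_pos _
  have h1 : (l * τ / 2) * E ≤ 1 := mul_exp_le_one (by positivity)
  have h4 : l * E ≤ 2 / τ := by rw [le_div_iff₀ hτ]; nlinarith
  have h2 : E ≤ Real.exp (-(lam0 / 2 * τ)) := by
    apply Real.exp_le_exp.mpr; nlinarith
  have h3 : Real.exp (-(l * τ)) = E * E := by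
    rw [hE, ← Real.exp_add]; congr 1; ring
  calc l * Real.exp (-(l * τ)) = (l * E) * E := by rw [h3]; ring
    _ ≤ (2 / τ) * E := mul_le_mul_of_nonneg_right h4 hEpos.le
    _ ≤ (2 / τ) * Real.exp (-(lam0 / 2 * τ)) :=
        mul_le_mul_of_nonneg_left h2 (by positivity)

lemma eucl_norm_sq {n : Type*} [Fintype n] (y : EuclideanSpace ℝ n) :
    ‖y‖ ^ 2 = ∑ k, (y k) ^ 2 := by
  rw [EuclideanSpace.norm_eq, Real.sq_sqrt (Finset.sum_nonneg fun k _ => sq_nonneg _)]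
  exact Finset.sum_congr rfl fun k _ => by rw [Real.norm_eq_abs, sq_abs]

set_option maxHeartbeats 1000000 in
/-- Deterministic core of Proposition A.5: if `f` is bounded by `M` and time-Hölder,
`‖f(t)−f(s)‖ ≤ K (t−s)^β (1+s^{-β})`, and `x ∈ D_θ` with `θ ∈ (0,1]`, then
`X(t) = S(t)x + ∫₀ᵗ S(t−s)f(s) ds` satisfies `X(t) ∈ D_1 = D(A)` and
`|X(t)|_1 ≤ C (1 + t^{θ−1}) (|x|_θ + M + K)`, `C` depending only on `θ`, `β`, `λ₀`. -/
theorem stmt17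
    (lam : ℕ → ℝ) (lam0 : ℝ) (hlam0 : 0 < lam0) (hlam : ∀ k, lam0 ≤ lam k)
    (S : ℝ → Hsp → Hsp)
    (hS : ∀ t : ℝ, 0 ≤ t → ∀ (x : Hsp) (k : ℕ), S t x k = Real.exp (-(lam k * t)) * x k)
    (M K : ℝ) (hM : 0 ≤ M) (hK : 0 ≤ K)
    (β : ℝ) (hβ : β ∈ Set.Ioo (0:ℝ) 1)
    (θ : ℝ) (hθ : θ ∈ Set.Ioc (0:ℝ) 1) :
    ∃ C > 0, ∀ f : ℝ → Hsp, ContinuousOn f (Set.Ioi 0) →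
      (∀ s : ℝ, 0 < s → ‖f s‖ ≤ M) →
      (∀ s t : ℝ, 0 < s → s < t → ‖f t - f s‖ ≤ K * (t - s) ^ β * (1 + s ^ (-β))) →
      ∀ x : Hsp, memD lam θ x → ∀ X : ℝ → Hsp,
      (∀ t : ℝ, 0 < t → X t = S t x + ∫ s in (0:ℝ)..t, S (t - s) (f s)) →
      ∀ t : ℝ, 0 < t →
        memD lam 1 (X t) ∧
        nrmD lam 1 (X t) ≤ C * (1 + t ^ (θ - 1)) * (nrmD lam θ x + M + K) := by
  obtain ⟨hβ0, hβ1⟩ := hβ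
  obtain ⟨hθ0, hθ1⟩ := hθ
  have hβ' : (0:ℝ) < 1 - β := by linarith
  set D : ℝ := (1 / β + 1 / (lam0 / 2)) + (1 / (1 - β) + 1 / β) with hD
  have hDpos : 0 < D := by positivity
  refine ⟨1 + 2 * D, by positivity, ?_⟩
  intro f hfc hfM hfH x hx X hX t ht
  have hl2 : (0:ℝ) < lam0 / 2 := by linarith
  have hIa := Ia_bound ⟨hβ0, hβ1⟩ hl2 ht
  have hIb := Ib_bound ⟨hβ0, hβ1⟩ ht
  have hGI := G_intervalIntegrable hlam0 hlam hS ht hfc hfM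
  have hlamk : ∀ k, 0 < lam k := fun k => lt_of_lt_of_le hlam0 (hlam k)
  have hexp_cont : ∀ c : ℝ, Continuous fun s : ℝ => Real.exp (-(c * (t - s))) := fun c =>
    Real.continuous_exp.comp ((continuous_const.mul (continuous_const.sub continuous_id)).neg)
  have hfk_cont : ∀ k : ℕ, ContinuousOn (fun s => f s k) (Set.Ioi 0) :=
    fun k => (evalCLM k).continuous.comp_continuousOn hfc
  have hfk_bd : ∀ (k : ℕ) (s : ℝ), 0 < s → |f s k| ≤ M := by
    intro k s hs
    have h := lp.norm_apply_le_norm (p := 2) (by norm_num) (f s) k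
    rw [Real.norm_eq_abs] at h
    exact h.trans (hfM s hs)
  have hexp_le_one : ∀ (k : ℕ) (τ : ℝ), 0 ≤ τ → Real.exp (-(lam k * τ)) ≤ 1 := by
    intro k τ hτ
    apply Real.exp_le_one_iff.mpr
    nlinarith [hlamk k]
  -- coordinatewise integrability
  have hIk3 : ∀ k : ℕ, IntervalIntegrable
      (fun s => Real.exp (-(lam k * (t - s))) * f t k) volume 0 t := fun k =>
    ((hexp_cont (lam k)).mul continuous_const).intervalIntegrable 0 t
  have hIk : ∀ k : ℕ, IntervalIntegrable
      (fun s => Real.exp (-(lam k * (t - s))) * f s k) volume 0 t := by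
    intro k
    refine II_of_bound ht.le (_root_.intervalIntegrable_const (c := M)) ?_ ?_
    · exact ((hexp_cont (lam k)).continuousOn).mul ((hfk_cont k).mono (fun s hs => hs.1))
    · intro s hs
      rw [abs_mul, abs_of_pos (Real.exp_pos _)]
      have h1 := hexp_le_one k (t - s) (by linarith [hs.2])
      have h2 := hfk_bd k s hs.1
      nlinarith [abs_nonneg (f s k), Real.exp_pos (-(lam k * (t - s)))]
  have hIk2 : ∀ k : ℕ, IntervalIntegrable
      (fun s => Real.exp (-(lam k * (t - s))) * (f s k - f t k)) volume 0 t := by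
    intro k
    have h := (hIk k).sub (hIk3 k)
    simpa [mul_sub] using h
  -- coordinates of X t
  have hXk : ∀ k : ℕ, X t k = Real.exp (-(lam k * t)) * x k
      + ∫ s in (0:ℝ)..t, Real.exp (-(lam k * (t - s))) * f s k := by
    intro k
    rw [hX t ht, lp.coeFn_add, Pi.add_apply, hS t ht.le]
    congr 1
    have hcomm := (evalCLM k).intervalIntegral_comp_comm hGI
    rw [show ((∫ s in (0:ℝ)..t, S (t - s) (f s)) k)
        = evalCLM k (∫ s in (0:ℝ)..t, S (t - s) (f s)) from rfl, ← hcomm]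
    apply intervalIntegral.integral_congr
    intro s hs
    rw [uIcc_of_le ht.le] at hs
    show S (t - s) (f s) k = _
    rw [hS (t - s) (by linarith [hs.1, hs.2]) (f s) k]
  have hlamt_exp : ∀ k : ℕ, (∫ s in (0:ℝ)..t, Real.exp (-(lam k * (t - s))))
      = (1 - Real.exp (-(lam k * t))) / lam k := by
    intro k
    rw [integral_exp_kernel (hlamk k) t 0 t]
    simp
  have hkey : ∀ k : ℕ, lam k * X t k
      = lam k * Real.exp (-(lam k * t)) * x k
        + (∫ s in (0:ℝ)..t, lam k * (Real.exp (-(lam k * (t - s))) * (f s k - f t k)))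
        + (1 - Real.exp (-(lam k * t))) * f t k := by
    intro k
    have hsplit : (∫ s in (0:ℝ)..t, Real.exp (-(lam k * (t - s))) * f s k)
        = (∫ s in (0:ℝ)..t, Real.exp (-(lam k * (t - s))) * (f s k - f t k))
          + (∫ s in (0:ℝ)..t, Real.exp (-(lam k * (t - s))) * f t k) := by
      rw [← intervalIntegral.integral_add (hIk2 k) (hIk3 k)]
      apply intervalIntegral.integral_congr
      intro s _
      ring
    rw [hXk k, hsplit, intervalIntegral.integral_mul_const, hlamt_exp k,
      intervalIntegral.integral_const_mul]
    have hne : lam k ≠ 0 := (hlamk k).ne'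
    field_simp
    ring
  -- notation
  set N := nrmD lam θ x with hN
  have hN0 : 0 ≤ N := Real.sqrt_nonneg _
  set P := t ^ (θ - 1) with hP
  have hPpos : 0 < P := Real.rpow_pos_of_pos ht _
  set Rb := P * N + 2 * K * D + M with hRb
  have hRb0 : 0 ≤ Rb := by positivity
  -- the finite-set bound
  have hFbound : ∀ F : Finset ℕ, ∑ k ∈ F, lam k ^ (2 * (1:ℝ)) * (X t k) ^ 2 ≤ Rb ^ 2 := by
    intro F
    classical
    set u : EuclideanSpace ℝ F :=
      (WithLp.equiv 2 _).symm (fun k : F => lam k * Real.exp (-(lam k * t)) * x k) with hudef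
    set w : EuclideanSpace ℝ F :=
      (WithLp.equiv 2 _).symm (fun k : F => (1 - Real.exp (-(lam k * t))) * f t k) with hwdef
    set g : ℝ → EuclideanSpace ℝ F := fun s =>
      (WithLp.equiv 2 _).symm
        (fun k : F => lam k * (Real.exp (-(lam k * (t - s))) * (f s k - f t k))) with hgdef
    have hgapp : ∀ (s : ℝ) (k : F),
        g s k = lam k * (Real.exp (-(lam k * (t - s))) * (f s k - f t k)) := fun s k => rfl
    have hgcont : ContinuousOn g (Set.Ioo 0 t) := by
      apply (PiLp.continuous_toLp 2 (fun _ : F => ℝ)).comp_continuousOn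
      apply continuousOn_pi.mpr
      intro k
      exact continuousOn_const.mul
        (((hexp_cont (lam k)).continuousOn).mul
          (((hfk_cont k).mono (fun s hs => hs.1)).sub continuousOn_const))
    have hgbd : ∀ s ∈ Set.Ioo (0:ℝ) t, ∀ k : F, |g s k| ≤ lam k * (2 * M) := by
      intro s hs k
      rw [hgapp, abs_mul, abs_mul, abs_of_pos (hlamk k)]
      have h1 := hexp_le_one k (t - s) (by linarith [hs.2])
      have h2 := hfk_bd k s hs.1
      have h3 := hfk_bd k t ht
      have h4 : |f s k - f t k| ≤ 2 * M := (abs_sub _ _).trans (by linarith)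
      have h5 : |Real.exp (-(lam k * (t - s)))| ≤ 1 := by
        rw [abs_of_pos (Real.exp_pos _)]; exact h1
      have := mul_le_mul h5 h4 (abs_nonneg _) zero_le_one
      rw [one_mul] at this
      exact mul_le_mul_of_nonneg_left this (hlamk k).le
    have hgI : IntervalIntegrable g volume 0 t := by
      rw [intervalIntegrable_iff_integrableOn_Ioo_of_le ht.le]
      refine ⟨hgcont.aestronglyMeasurable measurableSet_Ioo, ?_⟩
      refine HasFiniteIntegral.restrict_of_bounded
        (C := Real.sqrt (∑ k : F, (lam k * (2 * M)) ^ 2)) (by simp) ?_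
      filter_upwards [ae_restrict_mem measurableSet_Ioo] with s hs
      rw [EuclideanSpace.norm_eq]
      apply Real.sqrt_le_sqrt
      apply Finset.sum_le_sum
      intro k _
      rw [Real.norm_eq_abs, sq_abs]
      have := hgbd s hs k
      nlinarith [this, abs_nonneg (g s k), sq_abs (g s k), mul_nonneg (hlamk (k:ℕ)).le (by linarith : (0:ℝ) ≤ 2*M)]
    set v : EuclideanSpace ℝ F := ∫ s in (0:ℝ)..t, g s with hvdef
    have hvk : ∀ k : F, v k = ∫ s in (0:ℝ)..t, g s k := by
      intro k
      have h := (EuclideanSpace.proj (𝕜 := ℝ) k).intervalIntegral_comp_comm hgI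
      rw [hvdef, show (((∫ s in (0:ℝ)..t, g s) : EuclideanSpace ℝ F) k)
        = EuclideanSpace.proj (𝕜 := ℝ) k (∫ s in (0:ℝ)..t, g s) from rfl, ← h]
      rfl
    -- norm bounds
    have hu_bd : ‖u‖ ≤ P * N := by
      have hNdef : N = Real.sqrt (∑' k, lam k ^ (2 * θ) * (x k) ^ 2) := hN
      have htsum_nn : (0:ℝ) ≤ ∑' k, lam k ^ (2 * θ) * (x k) ^ 2 :=
        tsum_nonneg fun k => mul_nonneg (Real.rpow_nonneg (hlamk k).le _) (sq_nonneg _)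
      have hNsq : N ^ 2 = ∑' k, lam k ^ (2 * θ) * (x k) ^ 2 := by
        rw [hNdef, Real.sq_sqrt htsum_nn]
      refine le_of_sq_le_sq' (norm_nonneg _) (by positivity) ?_
      rw [eucl_norm_sq, mul_pow]
      have hstep : ∀ k : F, (u k) ^ 2 ≤ P ^ 2 * (lam (k:ℕ) ^ (2 * θ) * (x (k:ℕ)) ^ 2) := by
        intro k
        have hb := lam_exp_bound1 (hlamk (k:ℕ)) ht ⟨hθ0, hθ1⟩
        rw [← hP] at hb
        have h0 : (0:ℝ) ≤ lam (k:ℕ) * Real.exp (-(lam (k:ℕ) * t)) := (mul_pos (hlamk _) (Real.exp_pos _)).le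
        have hsq : lam (k:ℕ) ^ (2 * θ) = (lam (k:ℕ) ^ θ) ^ 2 := by
          rw [show 2 * θ = θ * 2 by ring, Real.rpow_mul (hlamk (k:ℕ)).le, Real.rpow_two]
        calc (u k) ^ 2 = (lam (k:ℕ) * Real.exp (-(lam (k:ℕ) * t))) ^ 2 * (x (k:ℕ)) ^ 2 := by
              rw [show u k = lam (k:ℕ) * Real.exp (-(lam (k:ℕ) * t)) * x (k:ℕ) from rfl]; ring
          _ ≤ (P * lam (k:ℕ) ^ θ) ^ 2 * (x (k:ℕ)) ^ 2 :=
              mul_le_mul_of_nonneg_right (pow_le_pow_left₀ h0 hb 2) (sq_nonneg _)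
          _ = P ^ 2 * (lam (k:ℕ) ^ (2 * θ) * (x (k:ℕ)) ^ 2) := by rw [hsq]; ring
      calc ∑ k : F, (u k) ^ 2
          ≤ ∑ k : F, P ^ 2 * (lam (k:ℕ) ^ (2 * θ) * (x (k:ℕ)) ^ 2) :=
            Finset.sum_le_sum fun k _ => hstep k
        _ = P ^ 2 * ∑ k : F, lam (k:ℕ) ^ (2 * θ) * (x (k:ℕ)) ^ 2 := by
            rw [Finset.mul_sum]
        _ = P ^ 2 * ∑ k ∈ F, lam k ^ (2 * θ) * (x k) ^ 2 := by
            rw [Finset.sum_coe_sort F (fun j => lam j ^ (2 * θ) * (x j) ^ 2)]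
        _ ≤ P ^ 2 * ∑' k, lam k ^ (2 * θ) * (x k) ^ 2 := by
            refine mul_le_mul_of_nonneg_left ?_ (sq_nonneg P)
            exact Summable.sum_le_tsum F (fun k _ => mul_nonneg (Real.rpow_nonneg (hlamk k).le _)
              (sq_nonneg _)) hx
        _ = P ^ 2 * N ^ 2 := by rw [hNsq]
    have hw_bd : ‖w‖ ≤ M := by
      refine le_of_sq_le_sq' (norm_nonneg _) hM ?_
      rw [eucl_norm_sq]
      have hstep : ∀ k : F, (w k) ^ 2 ≤ (f t (k:ℕ)) ^ 2 := by
        intro k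
        have he1 := hexp_le_one (k:ℕ) t ht.le
        have he0 := Real.exp_pos (-(lam (k:ℕ) * t))
        have h4 : (1 - Real.exp (-(lam (k:ℕ) * t))) ^ 2 ≤ 1 := by nlinarith
        calc (w k) ^ 2 = (1 - Real.exp (-(lam (k:ℕ) * t))) ^ 2 * (f t (k:ℕ)) ^ 2 := by
              rw [show w k = (1 - Real.exp (-(lam (k:ℕ) * t))) * f t (k:ℕ) from rfl]; ring
          _ ≤ 1 * (f t (k:ℕ)) ^ 2 := mul_le_mul_of_nonneg_right h4 (sq_nonneg _)
          _ = (f t (k:ℕ)) ^ 2 := one_mul _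
      calc ∑ k : F, (w k) ^ 2 ≤ ∑ k : F, (f t (k:ℕ)) ^ 2 := Finset.sum_le_sum fun k _ => hstep k
        _ = ∑ k ∈ F, (f t k) ^ 2 := Finset.sum_coe_sort F (fun j => (f t j) ^ 2)
        _ ≤ ‖f t‖ ^ 2 := finsum_sq_le (f t) F
        _ ≤ M ^ 2 := pow_le_pow_left₀ (norm_nonneg _) (hfM t ht) 2
    have hv_bd : ‖v‖ ≤ 2 * K * D := by
      set ψ : ℝ → ℝ := fun s => 2 * K * ((t - s) ^ (β - 1) * Real.exp (-(lam0 / 2 * (t - s)))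
        + (t - s) ^ (β - 1) * s ^ (-β)) with hψ
      have hψI : IntervalIntegrable ψ volume 0 t := (hIa.1.add hIb.1).const_mul (2 * K)
      have hpt : ∀ s ∈ Set.Ioo (0:ℝ) t, ‖g s‖ ≤ ψ s := by
        intro s hs
        obtain ⟨hs0, hst⟩ := hs
        have hτ : (0:ℝ) < t - s := by linarith
        set c := (2 / (t - s)) * Real.exp (-(lam0 / 2 * (t - s))) with hc
        have hcpos : 0 < c := by positivity
        have hco : ∀ k : F, |g s k| ≤ c * |(f s - f t) k| := by
          intro k
          have hb2 := lam_exp_bound2 hlam0 (hlam (k:ℕ)) hτ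
          rw [← hc] at hb2
          rw [lp.coeFn_sub, Pi.sub_apply]
          calc |g s k| = (lam (k:ℕ) * Real.exp (-(lam (k:ℕ) * (t - s)))) * |f s (k:ℕ) - f t (k:ℕ)| := by
                rw [hgapp, abs_mul, abs_mul, abs_of_pos (hlamk (k:ℕ)),
                  abs_of_pos (Real.exp_pos _)]
                ring
            _ ≤ c * |f s (k:ℕ) - f t (k:ℕ)| :=
                mul_le_mul_of_nonneg_right hb2 (abs_nonneg _)
        have h5 : ‖g s‖ ≤ c * ‖f s - f t‖ := by
          refine le_of_sq_le_sq' (norm_nonneg _) (by positivity) ?_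
          rw [eucl_norm_sq, mul_pow, norm_sq_eq_tsum (f s - f t), ← tsum_mul_left]
          calc ∑ k : F, (g s k) ^ 2
              ≤ ∑ k : F, c ^ 2 * ((f s - f t) (k:ℕ)) ^ 2 := by
                refine Finset.sum_le_sum fun k _ => ?_
                have hk := hco k
                nlinarith [abs_nonneg (g s k), sq_abs (g s k), sq_abs ((f s - f t) (k:ℕ)),
                  abs_nonneg ((f s - f t) (k:ℕ))]
            _ = ∑ k ∈ F, c ^ 2 * ((f s - f t) k) ^ 2 :=
                Finset.sum_coe_sort F (fun j => c ^ 2 * ((f s - f t) j) ^ 2)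
            _ ≤ ∑' k, c ^ 2 * ((f s - f t) k) ^ 2 :=
                Summable.sum_le_tsum F (fun k _ => mul_nonneg (sq_nonneg _) (sq_nonneg _))
                  ((sq_summable (f s - f t)).mul_left _)
        have h6 : ‖f s - f t‖ ≤ K * (t - s) ^ β * (1 + s ^ (-β)) := by
          rw [norm_sub_rev]; exact hfH s t hs0 hst
        have hτβ : (t - s) ^ β = (t - s) ^ (β - 1) * (t - s) := by
          rw [Real.rpow_sub_one hτ.ne']; field_simp
        have hE1 : Real.exp (-(lam0 / 2 * (t - s))) ≤ 1 := by
          apply Real.exp_le_one_iff.mpr; nlinarith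
        have hsb : (0:ℝ) ≤ s ^ (-β) := Real.rpow_nonneg hs0.le _
        have hτb : (0:ℝ) ≤ (t - s) ^ (β - 1) := Real.rpow_nonneg hτ.le _
        have hgoal : c * (K * ((t - s) ^ (β - 1) * (t - s)) * (1 + s ^ (-β)))
            = 2 * K * ((t - s) ^ (β - 1) * Real.exp (-(lam0 / 2 * (t - s)))) * (1 + s ^ (-β)) := by
          rw [hc]; field_simp
        calc ‖g s‖ ≤ c * (K * (t - s) ^ β * (1 + s ^ (-β))) :=
              h5.trans (mul_le_mul_of_nonneg_left h6 hcpos.le)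
          _ = 2 * K * ((t - s) ^ (β - 1) * Real.exp (-(lam0 / 2 * (t - s)))) * (1 + s ^ (-β)) := by
              rw [hτβ, hgoal]
          _ ≤ ψ s := by
              rw [hψ]
              nlinarith [mul_nonneg (mul_nonneg hK hτb) hsb, hE1, hsb, hτb, hK,
                mul_nonneg (mul_nonneg (mul_nonneg hK hτb) hsb)
                  (sub_nonneg.mpr hE1), Real.exp_pos (-(lam0 / 2 * (t - s)))]
      have h1 : ‖v‖ ≤ ∫ s in (0:ℝ)..t, ‖g s‖ := by
        rw [hvdef]; exact intervalIntegral.norm_integral_le_integral_norm ht.le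
      have h2 : (∫ s in (0:ℝ)..t, ‖g s‖) ≤ ∫ s in (0:ℝ)..t, ψ s :=
        integral_le_of_bound ht.le hgI.norm hψI hpt
      have h3 : (∫ s in (0:ℝ)..t, ψ s) = 2 * K *
          ((∫ s in (0:ℝ)..t, (t - s) ^ (β - 1) * Real.exp (-(lam0 / 2 * (t - s))))
            + ∫ s in (0:ℝ)..t, (t - s) ^ (β - 1) * s ^ (-β)) := by
        rw [hψ, intervalIntegral.integral_const_mul, intervalIntegral.integral_add hIa.1 hIb.1]
      have h4 : (∫ s in (0:ℝ)..t, (t - s) ^ (β - 1) * Real.exp (-(lam0 / 2 * (t - s))))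
          + (∫ s in (0:ℝ)..t, (t - s) ^ (β - 1) * s ^ (-β)) ≤ D := by
        rw [hD]; linarith [hIa.2, hIb.2]
      calc ‖v‖ ≤ ∫ s in (0:ℝ)..t, ψ s := h1.trans h2
        _ = 2 * K * (_ + _) := h3
        _ ≤ 2 * K * D := mul_le_mul_of_nonneg_left h4 (by positivity)
    -- identity and conclusion
    have hids : ∑ k ∈ F, lam k ^ (2 * (1:ℝ)) * (X t k) ^ 2 = ∑ k : F, ((u + v + w) k) ^ 2 := by
      rw [← Finset.sum_coe_sort]
      apply Finset.sum_congr rfl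
      intro k _
      have h1 : (u + v + w) k = u k + v k + w k := by
        rw [PiLp.add_apply, PiLp.add_apply]
      rw [h1, hvk k]
      have h2 : u k + (∫ s in (0:ℝ)..t, g s k) + w k = lam k * X t k := by
        rw [hkey (k:ℕ)]
        rfl
      rw [h2]
      have h3 : lam (k:ℕ) ^ (2 * (1:ℝ)) = lam (k:ℕ) ^ (2:ℕ) := by
        rw [show (2:ℝ) * 1 = (2:ℝ) by norm_num, Real.rpow_two]
      rw [h3, mul_pow]
    rw [hids]
    have hnorm2 : ∑ k : F, ((u + v + w) k) ^ 2 = ‖u + v + w‖ ^ 2 := by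
      rw [EuclideanSpace.norm_eq, Real.sq_sqrt (Finset.sum_nonneg fun k _ => sq_nonneg _)]
      apply Finset.sum_congr rfl
      intro k _
      rw [Real.norm_eq_abs, sq_abs]
    rw [hnorm2]
    have htri : ‖u + v + w‖ ≤ Rb := by
      refine (norm_add₃_le).trans ?_
      rw [hRb]
      exact add_le_add (add_le_add hu_bd hv_bd) hw_bd
    exact pow_le_pow_left₀ (norm_nonneg _) htri 2
  -- conclude
  have hterm_nonneg : ∀ k, 0 ≤ lam k ^ (2 * (1:ℝ)) * (X t k) ^ 2 :=
    fun k => mul_nonneg (Real.rpow_nonneg (hlamk k).le _) (sq_nonneg _)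
  have hsummable : memD lam 1 (X t) := by
    apply summable_of_sum_le hterm_nonneg hFbound
  refine ⟨hsummable, ?_⟩
  have htsum : ∑' k, lam k ^ (2 * (1:ℝ)) * (X t k) ^ 2 ≤ Rb ^ 2 :=
    Summable.tsum_le_of_sum_le hsummable hFbound
  have hfinal : nrmD lam 1 (X t) ≤ Rb := by
    rw [nrmD]
    calc Real.sqrt (∑' k, lam k ^ (2 * (1:ℝ)) * (X t k) ^ 2)
        ≤ Real.sqrt (Rb ^ 2) := Real.sqrt_le_sqrt htsum
      _ = Rb := Real.sqrt_sq hRb0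
  refine hfinal.trans ?_
  rw [hRb]
  nlinarith [mul_nonneg hPpos.le hM, mul_nonneg hPpos.le hK, mul_nonneg hPpos.le hN0,
    mul_nonneg hDpos.le hN0, mul_nonneg hDpos.le hM, mul_nonneg hDpos.le hK,
    mul_nonneg (mul_nonneg hDpos.le hPpos.le) hK,
    mul_nonneg (mul_nonneg hDpos.le hPpos.le) hM,
    mul_nonneg (mul_nonneg hDpos.le hPpos.le) hN0]

end
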